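/- Let U be unitary on a finite-dimensional Hilbert space with exactly one eigenvalue λ₀ (counted without multiplicity, with one-dimensional eigenspace spanned by unit vector v₀) satisfying Re λ ≥ 1 − δ, and suppose all other eigenvalues satisfy Re λ ≤ 1 − δ. If ψ is a unit vector with Re⟨ψ|U|ψ⟩ ≥ 1 − ε where ε < δ, then |⟨v₀|ψ⟩|² ≥ 1 − ε/δ. -/

import Mathlib

open Matrix

lemma aux_dot_ne {m : ℕ} (v : Fin m → ℂ) (hv : v ≠ 0) : star v ⬝ᵥ v ≠ 0 := by
  have hvv' : star v ⬝ᵥ v = ((∑ j, Complex.normSq (v j) : ℝ) : ℂ) := by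
    simp [dotProduct, Pi.star_apply, Complex.star_def, Complex.normSq_eq_conj_mul_self]
  rw [hvv']
  intro h
  apply hv
  have h0 : (∑ j, Complex.normSq (v j) : ℝ) = 0 := by exact_mod_cast h
  funext j
  have := (Finset.sum_eq_zero_iff_of_nonneg (fun i _ => Complex.normSq_nonneg (v i))).mp h0 j
    (Finset.mem_univ j)
  simpa using Complex.normSq_eq_zero.mp this

lemma aux_star_eig {m : ℕ} (U : Matrix (Fin m) (Fin m) ℂ)
    (hUU : Uᴴ * U = 1) (lam : ℂ) (v : Fin m → ℂ) (hv : v ≠ 0)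
    (hUv : U.mulVec v = lam • v) :
    (starRingEnd ℂ) lam * lam = 1 ∧ Uᴴ.mulVec v = (starRingEnd ℂ) lam • v := by
  have hvv : star v ⬝ᵥ v ≠ 0 := aux_dot_ne v hv
  have key : star (U.mulVec v) ⬝ᵥ (U.mulVec v) = star v ⬝ᵥ v := by
    rw [star_mulVec, ← dotProduct_mulVec, mulVec_mulVec, hUU, one_mulVec]
  rw [hUv] at key
  have e1 : star (lam • v) ⬝ᵥ (lam • v) = ((starRingEnd ℂ) lam * lam) * (star v ⬝ᵥ v) := by
    simp [star_smul, smul_dotProduct, dotProduct_smul, smul_eq_mul]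
    ring
  rw [e1] at key
  have key2 : ((starRingEnd ℂ) lam * lam - 1) * (star v ⬝ᵥ v) = 0 := by linear_combination key
  have hnorm : (starRingEnd ℂ) lam * lam = 1 := by
    rcases mul_eq_zero.mp key2 with h | h
    · exact sub_eq_zero.mp h
    · exact absurd h hvv
  refine ⟨hnorm, ?_⟩
  have hlamne : lam ≠ 0 := by rintro rfl; simp at hnorm
  have h1 : Uᴴ.mulVec (U.mulVec v) = v := by rw [mulVec_mulVec, hUU, one_mulVec]
  rw [hUv, mulVec_smul] at h1
  have h2 : Uᴴ.mulVec v = lam⁻¹ • v := by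
    calc Uᴴ.mulVec v = lam⁻¹ • (lam • (Uᴴ.mulVec v)) := by
          rw [smul_smul, inv_mul_cancel₀ hlamne, one_smul]
      _ = lam⁻¹ • v := by rw [h1]
  rw [h2]
  congr 1
  field_simp
  linear_combination -hnorm

lemma aux_exists_joint_eig {m : ℕ} (U : Matrix (Fin m) (Fin m) ℂ)
    (p : Submodule ℂ (Fin m → ℂ)) (hp : p ≠ ⊥)
    (hinv : ∀ x ∈ p, U.mulVecLin x ∈ p) :
    ∃ v ∈ p, v ≠ 0 ∧ ∃ lam : ℂ, U.mulVec v = lam • v := by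
  have : Nontrivial p := Submodule.nontrivial_iff_ne_bot.mpr hp
  obtain ⟨lam, hlam⟩ := Module.End.exists_eigenvalue (U.mulVecLin.restrict hinv)
  obtain ⟨v, hv⟩ := hlam.exists_hasEigenvector
  refine ⟨(v : Fin m → ℂ), v.2, ?_, lam, ?_⟩
  · simpa using hv.2
  · have := hv.apply_eq_smul
    have h2 := congrArg (Subtype.val) this
    simpa [LinearMap.restrict_apply] using h2

lemma aux_dichotomy {m : ℕ} (U : Matrix (Fin m) (Fin m) ℂ)
    (hUU : Uᴴ * U = 1) (hUU' : U * Uᴴ = 1)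
    (lam0 : ℂ) (v0 : Fin m → ℂ) (hv0 : star v0 ⬝ᵥ v0 = 1)
    (heig : U.mulVec v0 = lam0 • v0)
    (hspan : ∀ v : Fin m → ℂ, U.mulVec v = lam0 • v → ∃ c : ℂ, v = c • v0)
    (δ : ℝ)
    (hother : ∀ (mu : ℂ) (v : Fin m → ℂ), v ≠ 0 → U.mulVec v = mu • v →
      mu ≠ lam0 → mu.re ≤ 1 - δ)
    (e : ℝ) (x : Fin m → ℂ) (hx : x ≠ 0)
    (hHx : ((2:ℂ)⁻¹ • (U + Uᴴ)).mulVec x = ((e : ℝ) : ℂ) • x) (he : 1 - δ < e) :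
    e = lam0.re ∧ ∃ c : ℂ, x = c • v0 := by
  set H : Matrix (Fin m) (Fin m) ℂ := (2:ℂ)⁻¹ • (U + Uᴴ) with hHdef
  have hv0ne : v0 ≠ 0 := by
    intro h; rw [h] at hv0; simp at hv0
  -- action of H on joint eigenvectors
  have hHact : ∀ (lam : ℂ) (v : Fin m → ℂ), v ≠ 0 → U.mulVec v = lam • v →
      H.mulVec v = ((lam.re : ℝ) : ℂ) • v := by
    intro lam v hv hUv
    obtain ⟨_, hstar⟩ := aux_star_eig U hUU lam v hv hUv
    have h1 : H.mulVec v = (2:ℂ)⁻¹ • (U.mulVec v + Uᴴ.mulVec v) := by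
      rw [hHdef, smul_mulVec, add_mulVec]
    rw [h1, hUv, hstar, ← add_smul, smul_smul]
    congr 1
    have hac := Complex.add_conj lam
    push_cast at hac ⊢
    linear_combination (2:ℂ)⁻¹ * hac
  have hjoint : ∀ (lam : ℂ) (v : Fin m → ℂ), v ≠ 0 → U.mulVec v = lam • v →
      H.mulVec v = ((e : ℝ) : ℂ) • v → lam = lam0 ∧ e = lam.re := by
    intro lam v hv hUv hHv
    have h1 := hHact lam v hv hUv
    have h2 : (((e : ℝ) : ℂ) - ((lam.re : ℝ) : ℂ)) • v = 0 := by
      rw [sub_smul, ← hHv, ← h1, sub_self]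
    have h3 : e = lam.re := by
      rcases smul_eq_zero.mp h2 with h | h
      · exact_mod_cast sub_eq_zero.mp h
      · exact absurd h hv
    refine ⟨?_, h3⟩
    by_contra hne
    exact absurd (hother lam v hv hUv hne) (by rw [← h3]; linarith)
  -- the H-eigenspace for e
  set E : Submodule ℂ (Fin m → ℂ) := Module.End.eigenspace (H.mulVecLin) ((e : ℝ) : ℂ) with hEdef
  have hmemE : ∀ y, y ∈ E ↔ H.mulVec y = ((e : ℝ) : ℂ) • y := by
    intro y
    rw [hEdef, Module.End.mem_eigenspace_iff]
    simp [mulVecLin_apply]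
  have hcomm : H * U = U * H := by
    rw [hHdef, Matrix.smul_mul, Matrix.mul_smul, add_mul, mul_add, hUU, hUU']
  have hEinv : ∀ y ∈ E, U.mulVecLin y ∈ E := by
    intro y hy
    rw [hmemE] at hy ⊢
    simp only [mulVecLin_apply]
    rw [mulVec_mulVec, hcomm, ← mulVec_mulVec, hy, mulVec_smul]
  have hxE : x ∈ E := (hmemE x).mpr hHx
  have hEne : E ≠ ⊥ := Submodule.ne_bot_iff E |>.mpr ⟨x, hxE, hx⟩
  obtain ⟨v, hvE, hvne, lam, hUv⟩ := aux_exists_joint_eig U E hEne hEinv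
  obtain ⟨hlam, helam⟩ := hjoint lam v hvne hUv ((hmemE v).mp hvE)
  have he0 : e = lam0.re := by rw [helam, hlam]
  refine ⟨he0, ?_⟩
  -- linear functional y ↦ ⟨v0, y⟩
  set F : (Fin m → ℂ) →ₗ[ℂ] ℂ :=
    { toFun := fun y => star v0 ⬝ᵥ y
      map_add' := fun a b => dotProduct_add _ a b
      map_smul' := fun c a => by simp } with hFdef
  have hFapply : ∀ y, F y = star v0 ⬝ᵥ y := fun y => rfl
  obtain ⟨hnorm0, hstar0⟩ := aux_star_eig U hUU lam0 v0 hv0ne heig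
  set E' : Submodule ℂ (Fin m → ℂ) := E ⊓ LinearMap.ker F with hE'def
  have hE'inv : ∀ y ∈ E', U.mulVecLin y ∈ E' := by
    intro y hy
    rw [Submodule.mem_inf] at hy ⊢
    obtain ⟨hy1, hy2⟩ := hy
    refine ⟨hEinv y hy1, ?_⟩
    rw [LinearMap.mem_ker] at hy2 ⊢
    rw [hFapply] at hy2 ⊢
    simp only [mulVecLin_apply]
    have : vecMul (star v0) U = star (Uᴴ.mulVec v0) := by
      rw [star_mulVec, conjTranspose_conjTranspose]
    rw [dotProduct_mulVec, this, hstar0, star_smul, smul_dotProduct, hy2]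
    simp
  have hE'bot : E' = ⊥ := by
    by_contra hne
    obtain ⟨v', hv'E', hv'ne, lam', hUv'⟩ := aux_exists_joint_eig U E' hne hE'inv
    obtain ⟨hv'E, hv'K⟩ := Submodule.mem_inf.mp hv'E'
    obtain ⟨hlam', -⟩ := hjoint lam' v' hv'ne hUv' ((hmemE v').mp hv'E)
    rw [hlam'] at hUv'
    obtain ⟨c, hc⟩ := hspan v' hUv'
    have hFv' : F v' = 0 := LinearMap.mem_ker.mp hv'K
    rw [hFapply, hc, dotProduct_smul, hv0, smul_eq_mul, mul_one] at hFv'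
    exact hv'ne (by rw [hc, hFv', zero_smul])
  -- decompose x
  set a : ℂ := star v0 ⬝ᵥ x with hadef
  have hwE' : x - a • v0 ∈ E' := by
    rw [Submodule.mem_inf]
    constructor
    · rw [hmemE]
      have hHv0 : H.mulVec v0 = ((e : ℝ) : ℂ) • v0 := by
        rw [hHact lam0 v0 hv0ne heig, he0]
      rw [mulVec_sub, mulVec_smul, hHv0, hHx, smul_sub, smul_comm]
    · rw [LinearMap.mem_ker, hFapply, dotProduct_sub, dotProduct_smul, hv0,
        smul_eq_mul, mul_one, ← hadef, sub_self]
  have : x - a • v0 = 0 := by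
    rw [hE'bot] at hwE'
    simpa using hwE'
  exact ⟨a, by rw [← sub_eq_zero]; exact this⟩

/-- If a unitary `U` has a unique eigenvalue `λ₀` with `Re λ₀ ≥ 1 − δ`, with
one-dimensional eigenspace spanned by the unit vector `v₀`, all other
eigenvalues having real part at most `1 − δ`, and `ψ` is a unit vector with
`Re⟨ψ|U|ψ⟩ ≥ 1 − ε` where `ε < δ`, then `|⟨v₀|ψ⟩|² ≥ 1 − ε/δ`. -/
theorem overlap_lower_bound (m : ℕ)
    (U : Matrix (Fin m) (Fin m) ℂ) (hU : U ∈ Matrix.unitaryGroup (Fin m) ℂ)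
    (lam0 : ℂ) (v0 : Fin m → ℂ) (hv0 : star v0 ⬝ᵥ v0 = 1)
    (heig : U.mulVec v0 = lam0 • v0)
    (hspan : ∀ v : Fin m → ℂ, U.mulVec v = lam0 • v → ∃ c : ℂ, v = c • v0)
    (δ ε : ℝ) (hδ : 0 < ε) (hεδ : ε < δ)
    (hother : ∀ (mu : ℂ) (v : Fin m → ℂ), v ≠ 0 → U.mulVec v = mu • v →
      mu ≠ lam0 → mu.re ≤ 1 - δ)
    (ψ : Fin m → ℂ) (hψ : star ψ ⬝ᵥ ψ = 1)
    (h : (star ψ ⬝ᵥ U.mulVec ψ).re ≥ 1 - ε) :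
    ‖star v0 ⬝ᵥ ψ‖ ^ 2 ≥ 1 - ε / δ := by
  classical
  have hδpos : 0 < δ := lt_trans hδ hεδ
  have hUU : Uᴴ * U = 1 := by
    have := (Matrix.mem_unitaryGroup_iff').mp hU
    rwa [Matrix.star_eq_conjTranspose] at this
  have hUU' : U * Uᴴ = 1 := by
    have := (Matrix.mem_unitaryGroup_iff).mp hU
    rwa [Matrix.star_eq_conjTranspose] at this
  have hv0ne : v0 ≠ 0 := by intro h0; rw [h0] at hv0; simp at hv0
  set H : Matrix (Fin m) (Fin m) ℂ := (2:ℂ)⁻¹ • (U + Uᴴ) with hHdef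
  have hH : H.IsHermitian := by
    rw [Matrix.IsHermitian, hHdef, conjTranspose_smul, conjTranspose_add,
      conjTranspose_conjTranspose, add_comm]
    congr 1
    simp
  set b := hH.eigenvectorBasis with hbdef
  set ev := hH.eigenvalues with hevdef
  set V : Matrix (Fin m) (Fin m) ℂ := (hH.eigenvectorUnitary : Matrix (Fin m) (Fin m) ℂ)
    with hVdef
  have hVmem : V ∈ Matrix.unitaryGroup (Fin m) ℂ := (hH.eigenvectorUnitary).2
  have hVV' : V * Vᴴ = 1 := by
    have := (Matrix.mem_unitaryGroup_iff).mp hVmem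
    rwa [Matrix.star_eq_conjTranspose] at this
  set φ : Fin m → ℂ := fun i => star ⇑(b i) ⬝ᵥ ψ with hφdef
  set t : Fin m → ℝ := fun i => Complex.normSq (φ i) with htdef
  have htnn : ∀ i, 0 ≤ t i := fun i => Complex.normSq_nonneg _
  have horth : ∀ i j, star ⇑(b i) ⬝ᵥ ⇑(b j) = if i = j then 1 else 0 := fun i j =>
    by have := orthonormal_iff_ite.mp b.orthonormal i j
       rwa [EuclideanSpace.inner_eq_star_dotProduct, dotProduct_comm] at this
  have hφ' : Vᴴ.mulVec ψ = φ := by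
    funext i
    simp [mulVec, dotProduct, conjTranspose_apply, hφdef, hVdef]
    rfl
  -- sum of t equals 1
  have hsum1C : star (Vᴴ.mulVec ψ) ⬝ᵥ (Vᴴ.mulVec ψ) = 1 := by
    rw [star_mulVec, conjTranspose_conjTranspose, ← dotProduct_mulVec, mulVec_mulVec, hVV',
      one_mulVec, hψ]
  have hsum1 : ∑ i, t i = 1 := by
    have : star φ ⬝ᵥ φ = ((∑ i, t i : ℝ) : ℂ) := by
      simp [dotProduct, Pi.star_apply, Complex.star_def, Complex.normSq_eq_conj_mul_self,
        htdef]
    rw [hφ'] at hsum1C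
    rw [this] at hsum1C
    exact_mod_cast hsum1C
  -- Rayleigh quotient of H
  have hsum2C : star ψ ⬝ᵥ (H.mulVec ψ) = ((∑ i, ev i * t i : ℝ) : ℂ) := by
    conv_lhs => rw [hH.spectral_theorem, Unitary.conjStarAlgAut_apply]
    rw [Matrix.star_eq_conjTranspose, ← mulVec_mulVec, ← mulVec_mulVec, hφ',
      dotProduct_mulVec, dotProduct_mulVec]
    have hstarφ : vecMul (star ψ) V = star φ := by
      rw [← hφ', star_mulVec, conjTranspose_conjTranspose]
    rw [← hVdef, hstarφ]
    have hterm : (star φ) ᵥ* (diagonal (RCLike.ofReal ∘ hH.eigenvalues)) ⬝ᵥ φ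
        = ∑ i, ((ev i : ℝ) : ℂ) * ((starRingEnd ℂ) (φ i) * φ i) := by
      simp only [dotProduct, vecMul_diagonal, Pi.star_apply, Complex.star_def,
        Function.comp_apply, RCLike.ofReal_alg]
      exact Finset.sum_congr rfl fun i _ => by rw [Complex.real_smul, mul_one]; ring
    rw [hterm, Complex.ofReal_sum]
    exact Finset.sum_congr rfl fun i _ => by
      rw [htdef]
      push_cast [Complex.normSq_eq_conj_mul_self]
      ring
  -- relate to Re of the U-expectation
  have hconj : star ψ ⬝ᵥ (Uᴴ.mulVec ψ) = star (star ψ ⬝ᵥ (U.mulVec ψ)) := by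
    rw [dotProduct_mulVec, ← star_mulVec, star_dotProduct]
  have hsum2 : ∑ i, ev i * t i = (star ψ ⬝ᵥ U.mulVec ψ).re := by
    have hexp : star ψ ⬝ᵥ (H.mulVec ψ)
        = (2:ℂ)⁻¹ * (star ψ ⬝ᵥ U.mulVec ψ + star ψ ⬝ᵥ Uᴴ.mulVec ψ) := by
      rw [hHdef, smul_mulVec, add_mulVec, dotProduct_smul, dotProduct_add, smul_eq_mul]
    rw [hexp, hconj] at hsum2C
    have h2 : (2:ℂ)⁻¹ * (star ψ ⬝ᵥ U.mulVec ψ + star (star ψ ⬝ᵥ U.mulVec ψ))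
        = (((star ψ ⬝ᵥ U.mulVec ψ).re : ℝ) : ℂ) := by
      have hac := Complex.add_conj (star ψ ⬝ᵥ U.mulVec ψ)
      push_cast at hac ⊢
      rw [Complex.star_def]
      linear_combination (2:ℂ)⁻¹ * hac
    rw [h2] at hsum2C
    exact_mod_cast hsum2C.symm
  have hge : ∑ i, ev i * t i ≥ 1 - ε := by rw [hsum2]; exact h
  -- the dichotomy for eigenvalues
  have hbne : ∀ i, ⇑(b i) ≠ (0 : Fin m → ℂ) := by
    intro i h0
    have h1 := horth i i
    rw [h0] at h1
    simp at h1
  have hdich : ∀ i, 1 - δ < ev i → ev i = lam0.re ∧ ∃ c : ℂ, ⇑(b i) = c • v0 := by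
    intro i hi
    have h1 := hH.mulVec_eigenvectorBasis i
    have h2 : H.mulVec ⇑(b i) = ((ev i : ℝ) : ℂ) • ⇑(b i) := by
      rw [← hbdef, ← hevdef] at h1
      rw [h1]
      funext j
      simp [Pi.smul_apply, Complex.real_smul]
    exact aux_dichotomy U hUU hUU' lam0 v0 hv0 heig hspan δ hother (ev i) _ (hbne i) h2 hi
  have hnorm0 := (aux_star_eig U hUU lam0 v0 hv0ne heig).1
  have hlam0re : lam0.re ≤ 1 := by
    have hns : Complex.normSq lam0 = 1 := by
      have h1 : ((Complex.normSq lam0 : ℝ) : ℂ) = 1 := by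
        rw [Complex.normSq_eq_conj_mul_self]; exact hnorm0
      exact_mod_cast h1
    have habs : ‖lam0‖ = 1 := by
      have h2 : ‖lam0‖ ^ 2 = 1 := by rw [Complex.sq_norm, hns]
      nlinarith [norm_nonneg lam0]
    calc lam0.re ≤ ‖lam0‖ := Complex.re_le_norm lam0
      _ = 1 := habs
  set S : Finset (Fin m) := Finset.univ.filter (fun i => 1 - δ < ev i) with hSdef
  have hmemS : ∀ i, i ∈ S ↔ 1 - δ < ev i := by
    intro i; rw [hSdef, Finset.mem_filter]; simp
  have hSsub : ∀ i ∈ S, ∀ j ∈ S, i = j := by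
    intro i hi j hj
    by_contra hne
    obtain ⟨-, c, hc⟩ := hdich i ((hmemS i).mp hi)
    obtain ⟨-, d, hd⟩ := hdich j ((hmemS j).mp hj)
    have h0 := horth i j
    rw [if_neg hne, hc, hd, star_smul, smul_dotProduct, dotProduct_smul, hv0] at h0
    simp only [smul_eq_mul, mul_one, Pi.star_apply] at h0
    have hc1 := horth i i
    rw [if_pos rfl, hc, star_smul, smul_dotProduct, dotProduct_smul, hv0] at hc1
    simp only [smul_eq_mul, mul_one] at hc1
    have hd1 := horth j j
    rw [if_pos rfl, hd, star_smul, smul_dotProduct, dotProduct_smul, hv0] at hd1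
    simp only [smul_eq_mul, mul_one] at hd1
    rcases mul_eq_zero.mp h0 with h' | h'
    · rw [h'] at hc1; simp at hc1
    · rw [h'] at hd1; simp at hd1
  have hSne : S.Nonempty := by
    by_contra hS
    rw [Finset.not_nonempty_iff_eq_empty] at hS
    have hall : ∀ i, ev i ≤ 1 - δ := by
      intro i
      by_contra hgt
      push_neg at hgt
      have : i ∈ S := (hmemS i).mpr hgt
      rw [hS] at this
      simp at this
    have hle : ∑ i, ev i * t i ≤ 1 - δ := by
      calc ∑ i, ev i * t i ≤ ∑ i, (1-δ) * t i :=
            Finset.sum_le_sum fun i _ => mul_le_mul_of_nonneg_right (hall i) (htnn i)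
        _ = (1-δ) * ∑ i, t i := by rw [Finset.mul_sum]
        _ = 1 - δ := by rw [hsum1, mul_one]
    linarith [hge]
  obtain ⟨i0, hi0⟩ := hSne
  obtain ⟨hev0, c, hc⟩ := hdich i0 ((hmemS i0).mp hi0)
  have hc1 : (starRingEnd ℂ) c * c = 1 := by
    have h1 := horth i0 i0
    rw [if_pos rfl, hc, star_smul, smul_dotProduct, dotProduct_smul, hv0] at h1
    simpa [smul_eq_mul] using h1
  have hT : t i0 = ‖star v0 ⬝ᵥ ψ‖ ^ 2 := by
    have hφ0 : φ i0 = (starRingEnd ℂ) c * (star v0 ⬝ᵥ ψ) := by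
      show star ⇑(b i0) ⬝ᵥ ψ = _
      rw [hc, star_smul, smul_dotProduct]
      simp [smul_eq_mul]
    have hnsc : Complex.normSq c = 1 := by
      have h1 : ((Complex.normSq c : ℝ) : ℂ) = 1 := by
        rw [Complex.normSq_eq_conj_mul_self]; exact hc1
      exact_mod_cast h1
    show Complex.normSq (φ i0) = _
    rw [hφ0, Complex.normSq_mul, Complex.normSq_conj, hnsc, one_mul, ← Complex.sq_norm]
  have hothers : ∀ i, i ≠ i0 → ev i ≤ 1 - δ := by
    intro i hne
    by_contra hgt
    push_neg at hgt
    exact hne (hSsub i ((hmemS i).mpr hgt) i0 hi0)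
  have hsplit : ev i0 * t i0 + ∑ i ∈ Finset.univ.erase i0, ev i * t i = ∑ i, ev i * t i :=
    Finset.add_sum_erase _ (fun i => ev i * t i) (Finset.mem_univ i0)
  have hsplitt : ∑ i ∈ Finset.univ.erase i0, t i = 1 - t i0 := by
    have h1 := Finset.add_sum_erase Finset.univ t (Finset.mem_univ i0)
    linarith [hsum1, h1]
  have hbound2 : ∑ i ∈ Finset.univ.erase i0, ev i * t i ≤ (1-δ) * (1 - t i0) := by
    calc ∑ i ∈ Finset.univ.erase i0, ev i * t i
        ≤ ∑ i ∈ Finset.univ.erase i0, (1-δ) * t i :=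
          Finset.sum_le_sum fun i hi =>
            mul_le_mul_of_nonneg_right (hothers i (Finset.ne_of_mem_erase hi)) (htnn i)
      _ = (1-δ) * ∑ i ∈ Finset.univ.erase i0, t i := by rw [Finset.mul_sum]
      _ = (1-δ) * (1 - t i0) := by rw [hsplitt]
  have hev1 : ev i0 ≤ 1 := by rw [hev0]; exact hlam0re
  have hkey : 1 - ε ≤ t i0 + (1-δ) * (1 - t i0) := by
    have h1 : ev i0 * t i0 ≤ t i0 := by nlinarith [htnn i0]
    linarith [hge, hsplit, hbound2]
  have hfinal : 1 - ε/δ ≤ t i0 := by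
    have h1 : (δ - ε)/δ ≤ t i0 := by
      rw [div_le_iff₀ hδpos]
      nlinarith [hkey]
    rw [sub_div, div_self (ne_of_gt hδpos)] at h1
    linarith
  rw [ge_iff_le, ← hT]
  exact hfinal
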